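/- For r ∈ ℕ and s ∈ {1,2,...,r}, the r-derangement numbers satisfy the recurrence d_{k,r} = sum_{j=s}^{k} C(j-1, s-1) * (k! / (k-j)!) * d_{k-j, r-s}. -/

import Mathlib

open Nat Finset PowerSeries

lemma inv_one_sub_pow_eq (n : ℕ) : ((1 - X : ℚ⟦X⟧) ^ n)⁻¹ = (invOneSubPow ℚ n).val := by
  rw [PowerSeries.inv_eq_iff_mul_eq_one]
  · rw [← invOneSubPow_inv_eq_one_sub_pow]
    exact (invOneSubPow ℚ n).val_inv
  · simp

theorem stmt_2 (d : ℕ → ℕ → ℚ)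
    (hd : ∀ r : ℕ, PowerSeries.mk (fun k => d k r / (k ! : ℚ)) =
      X ^ r * rescale (-1 : ℚ) (exp ℚ) * ((1 - X) ^ (r + 1))⁻¹)
    (r s k : ℕ) (hs1 : 1 ≤ s) (hsr : s ≤ r) :
    d k r = ∑ j ∈ Finset.Icc s k,
      ((j - 1).choose (s - 1) : ℚ) * (k.descFactorial j : ℚ) * d (k - j) (r - s) := by
  have key : (PowerSeries.mk (fun k => d k r / (k ! : ℚ)) : ℚ⟦X⟧) =
      (X ^ s * (invOneSubPow ℚ s).val) * PowerSeries.mk (fun k => d k (r - s) / (k ! : ℚ)) := by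
    obtain ⟨m, rfl⟩ : ∃ m, r = s + m := ⟨r - s, by omega⟩
    have hm : s + m - s = m := by omega
    have hu : invOneSubPow ℚ (s + m + 1) = invOneSubPow ℚ s * invOneSubPow ℚ (m + 1) := by
      rw [invOneSubPow_eq_inv_one_sub_pow, invOneSubPow_eq_inv_one_sub_pow,
        invOneSubPow_eq_inv_one_sub_pow, ← pow_add, add_assoc]
    rw [hd (s + m), hd (s + m - s), inv_one_sub_pow_eq, inv_one_sub_pow_eq, hm, hu,
      Units.val_mul, pow_add]
    ring
  have hc := congrArg (PowerSeries.coeff k) key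
  rw [coeff_mk, PowerSeries.coeff_mul] at hc
  -- coefficient of X^s * invOneSubPow at j
  have hco : ∀ j : ℕ, (PowerSeries.coeff j) (X ^ s * (invOneSubPow ℚ s).val) =
      if s ≤ j then ((j - 1).choose (s - 1) : ℚ) else 0 := by
    intro j
    rw [PowerSeries.coeff_X_pow_mul']
    split_ifs with h
    · rw [invOneSubPow_val_eq_mk_sub_one_add_choose_of_pos ℚ s hs1, coeff_mk]
      congr 2
      omega
    · rfl
  simp only [Finset.Nat.sum_antidiagonal_eq_sum_range_succ_mk, coeff_mk, hco, ite_mul,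
    zero_mul] at hc
  have hfilter : (Finset.range (k + 1)).filter (fun j => s ≤ j) = Finset.Icc s k := by
    ext j; simp [Nat.lt_succ_iff]; omega
  rw [← Finset.sum_filter, hfilter] at hc
  have hk : (k ! : ℚ) ≠ 0 := by
    exact_mod_cast Nat.factorial_ne_zero k
  rw [div_eq_iff hk] at hc
  rw [hc, Finset.sum_mul]
  refine Finset.sum_congr rfl fun j hj => ?_
  have hjk : j ≤ k := (Finset.mem_Icc.mp hj).2
  have h1 : ((k - j)! : ℚ) * (k.descFactorial j : ℚ) = (k ! : ℚ) := by
    exact_mod_cast Nat.factorial_mul_descFactorial hjk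
  have h2 : ((k - j)! : ℚ) ≠ 0 := by exact_mod_cast Nat.factorial_ne_zero (k - j)
  field_simp [← h1]
  rw [← h1]; ring
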